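/- Let p₁, q₁, p₂, q₂ ∈ ℝ³ with ⟨p₁, q₁⟩ = 1 and ⟨p₂, q₂⟩ = 1. For p, q ∈ ℝ³ with ⟨p, q⟩ = 1 define S_{(p,q)} = {P : P a symmetric positive definite real 3×3 matrix with det P = 1 and P·q = p}. Then S_{(p₁,q₁)} = S_{(p₂,q₂)} if and only if (p₁, q₁) = (p₂, q₂) or (p₁, q₁) = (−p₂, −q₂). -/

import Mathlib

open Matrix

private lemma posdef_conj' {n : Type*} [Fintype n] [DecidableEq n] {D B : Matrix n n ℝ}
    (hD : D.PosDef) (hB : IsUnit B.det) : (B * D * Bᵀ).PosDef := by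
  have hDh : Dᵀ = D := hD.1
  rw [Matrix.posDef_iff_dotProduct_mulVec]
  constructor
  · show (B * D * Bᵀ)ᴴ = _
    simp [conjTranspose_mul, Matrix.mul_assoc, hDh, show Bᴴ = Bᵀ from rfl,
      show (Bᵀ)ᴴ = B from rfl, show Dᴴ = Dᵀ from rfl]
  · intro x hx
    have hBt : IsUnit (Bᵀ).det := by simpa using hB
    have hy : Bᵀ *ᵥ x ≠ 0 := by
      intro h
      apply hx
      have := congrArg (fun v => (Bᵀ)⁻¹ *ᵥ v) h
      simpa [Matrix.mulVec_mulVec, Matrix.nonsing_inv_mul _ hBt] using this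
    have := hD.dotProduct_mulVec_pos hy
    have key : star x ⬝ᵥ (B * D * Bᵀ) *ᵥ x = star (Bᵀ *ᵥ x) ⬝ᵥ D *ᵥ (Bᵀ *ᵥ x) := by
      simp only [star_trivial, ← Matrix.mulVec_mulVec]
      rw [Matrix.dotProduct_mulVec, ← Matrix.mulVec_transpose]
    rw [key]
    exact this

private lemma exists_g_aux' (p q a b : Fin 3 → ℝ) (hpq : p ⬝ᵥ q = 1)
    (hab : p ⬝ᵥ (a ⨯₃ b) ≠ 0) :
    ∃ g : Matrix (Fin 3) (Fin 3) ℝ, IsUnit g.det ∧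
      g.mulVec p = Pi.single 0 1 ∧ gᵀ.mulVec (Pi.single 0 1) = q := by
  have hpq' : p 0 * q 0 + p 1 * q 1 + p 2 * q 2 = 1 := by
    simpa [dotProduct, Fin.sum_univ_three] using hpq
  refine ⟨Matrix.of ![q, p ⨯₃ a, p ⨯₃ b], ?_, ?_, ?_⟩
  · rw [isUnit_iff_ne_zero]
    have : (Matrix.of ![q, p ⨯₃ a, p ⨯₃ b] : Matrix (Fin 3) (Fin 3) ℝ).det
        = (p ⬝ᵥ (a ⨯₃ b)) * (p ⬝ᵥ q) := by
      simp [Matrix.det_fin_three, crossProduct, dotProduct, Fin.sum_univ_three]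
      ring
    rw [this, hpq, mul_one]
    exact hab
  · ext i
    fin_cases i
    · simp [Matrix.mulVec, dotProduct, crossProduct, Fin.sum_univ_three, Pi.single]
      linear_combination hpq'
    · simp [Matrix.mulVec, dotProduct, crossProduct, Fin.sum_univ_three, Pi.single]
      ring
    · simp [Matrix.mulVec, dotProduct, crossProduct, Fin.sum_univ_three, Pi.single]
      ring
  · ext j
    fin_cases j <;> simp [Matrix.mulVec, dotProduct, Fin.sum_univ_three, Pi.single]

private lemma exists_g' (p q : Fin 3 → ℝ) (hpq : p ⬝ᵥ q = 1) :
    ∃ g : Matrix (Fin 3) (Fin 3) ℝ, IsUnit g.det ∧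
      g.mulVec p = Pi.single 0 1 ∧ gᵀ.mulVec (Pi.single 0 1) = q := by
  have hp : p ≠ 0 := by
    rintro rfl
    simp at hpq
  obtain ⟨i, hi⟩ : ∃ i, p i ≠ 0 := Function.ne_iff.mp hp
  fin_cases i
  · exact exists_g_aux' p q (Pi.single 1 1) (Pi.single 2 1) hpq (by
      simpa [crossProduct, dotProduct, Fin.sum_univ_three, Pi.single] using hi)
  · exact exists_g_aux' p q (Pi.single 2 1) (Pi.single 0 1) hpq (by
      simpa [crossProduct, dotProduct, Fin.sum_univ_three, Pi.single] using hi)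
  · exact exists_g_aux' p q (Pi.single 0 1) (Pi.single 1 1) hpq (by
      simpa [crossProduct, dotProduct, Fin.sum_univ_three, Pi.single] using hi)

open Matrix in
theorem stmt10 (p₁ q₁ p₂ q₂ : Fin 3 → ℝ)
    (h₁ : p₁ ⬝ᵥ q₁ = 1) (h₂ : p₂ ⬝ᵥ q₂ = 1)
    (S : (Fin 3 → ℝ) → (Fin 3 → ℝ) → Set (Matrix (Fin 3) (Fin 3) ℝ))
    (hS : ∀ p q : Fin 3 → ℝ, S p q =
      {P | P.IsSymm ∧ P.PosDef ∧ P.det = 1 ∧ P.mulVec q = p}) :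
    S p₁ q₁ = S p₂ q₂ ↔ (p₁ = p₂ ∧ q₁ = q₂) ∨ (p₁ = -p₂ ∧ q₁ = -q₂) := by
  constructor
  · intro h
    rw [hS, hS] at h
    obtain ⟨g, hdet, hgp, hgq⟩ := exists_g' p₁ q₁ h₁
    have hd0 : g.det ≠ 0 := hdet.ne_zero
    have hinv1 : g⁻¹ * g = 1 := Matrix.nonsing_inv_mul g hdet
    have hinv2 : g * g⁻¹ = 1 := Matrix.mul_nonsing_inv g hdet
    set e₀ : Fin 3 → ℝ := Pi.single 0 1 with he₀
    -- the family of matrices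
    set D : ℝ → Matrix (Fin 3) (Fin 3) ℝ :=
      fun t => Matrix.diagonal ![1, g.det ^ 2 * t, 1 / t] with hD
    set P : ℝ → Matrix (Fin 3) (Fin 3) ℝ := fun t => g⁻¹ * D t * (g⁻¹)ᵀ with hP
    have hq1 : (g⁻¹)ᵀ *ᵥ q₁ = e₀ := by
      rw [← hgq, Matrix.mulVec_mulVec, ← Matrix.transpose_mul, hinv2, Matrix.transpose_one,
        Matrix.one_mulVec]
    have hDe0 : ∀ t : ℝ, D t *ᵥ e₀ = e₀ := by
      intro t
      ext i
      fin_cases i <;> simp [hD, he₀, Matrix.mulVec_diagonal, Pi.single]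
    have hp1 : g⁻¹ *ᵥ e₀ = p₁ := by
      rw [← hgp, Matrix.mulVec_mulVec, hinv1, Matrix.one_mulVec]
    have hmem : ∀ t : ℝ, 0 < t →
        P t ∈ {M : Matrix (Fin 3) (Fin 3) ℝ | M.IsSymm ∧ M.PosDef ∧ M.det = 1 ∧
          M.mulVec q₁ = p₁} := by
      intro t ht
      have hDpos : (D t).PosDef := by
        apply Matrix.PosDef.diagonal
        intro i
        fin_cases i
        · norm_num
        · have := pow_pos (abs_pos.mpr hd0) 2
          simpa [sq_abs] using mul_pos (by simpa [sq_abs] using this) ht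
        · simpa using one_div_pos.mpr ht
      refine ⟨?_, ?_, ?_, ?_⟩
      · show (P t)ᵀ = P t
        simp [hP, hD, Matrix.transpose_mul, Matrix.mul_assoc, Matrix.diagonal_transpose]
      · exact posdef_conj' hDpos (by simpa [Matrix.det_nonsing_inv] using hdet.unit⁻¹.isUnit)
      · have hDdet : (D t).det = g.det ^ 2 := by
          simp [hD, Matrix.det_diagonal, Fin.prod_univ_three]
          field_simp
        simp only [hP, Matrix.det_mul, Matrix.det_transpose, Matrix.det_nonsing_inv, hDdet]
        rw [Ring.inverse_eq_inv']
        field_simp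
      · calc P t *ᵥ q₁ = g⁻¹ *ᵥ (D t *ᵥ ((g⁻¹)ᵀ *ᵥ q₁)) := by
              simp [hP, Matrix.mulVec_mulVec, Matrix.mul_assoc]
          _ = p₁ := by rw [hq1, hDe0, hp1]
    have hmem2 : ∀ t : ℝ, 0 < t → P t *ᵥ q₂ = p₂ := by
      intro t ht
      have := hmem t ht
      rw [h] at this
      exact this.2.2.2
    -- extract the coordinates of w
    set w : Fin 3 → ℝ := (g⁻¹)ᵀ *ᵥ q₂ with hw
    have hDw : ∀ t : ℝ, 0 < t → D t *ᵥ w = g *ᵥ p₂ := by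
      intro t ht
      have h2 : g *ᵥ ((g⁻¹ * D t * (g⁻¹)ᵀ) *ᵥ q₂) = g *ᵥ p₂ := congrArg _ (hmem2 t ht)
      calc D t *ᵥ w = (g * (g⁻¹ * D t * (g⁻¹)ᵀ)) *ᵥ q₂ := by
            rw [hw, Matrix.mulVec_mulVec]
            simp only [Matrix.mul_assoc]
            rw [← Matrix.mul_assoc g g⁻¹, hinv2, Matrix.one_mul]
        _ = g *ᵥ p₂ := by rw [← Matrix.mulVec_mulVec]; exact h2
    have h12 : D 1 *ᵥ w = D 2 *ᵥ w := by
      rw [hDw 1 one_pos, hDw 2 two_pos]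
    have hw1 : w 1 = 0 := by
      have := congrFun h12 1
      simp [hD, Matrix.mulVec_diagonal] at this
      rcases this with h' | h'
      · exfalso
        have hz : g.det ^ 2 = 0 := by linarith
        exact hd0 (by simpa using pow_eq_zero_iff (n := 2) (by norm_num) |>.mp hz)
      · exact h'
    have hw2 : w 2 = 0 := by
      have := congrFun h12 2
      simp [hD, Matrix.mulVec_diagonal] at this
      linarith
    obtain ⟨c, hc⟩ : ∃ c : ℝ, w = c • e₀ := by
      refine ⟨w 0, ?_⟩
      ext i
      fin_cases i <;> simp [he₀, hw1, hw2, Pi.single]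
    have hq2 : q₂ = c • q₁ := by
      have hwq : gᵀ *ᵥ w = q₂ := by
        rw [hw, Matrix.mulVec_mulVec, ← Matrix.transpose_mul, hinv1, Matrix.transpose_one,
          Matrix.one_mulVec]
      rw [← hwq, hc, Matrix.mulVec_smul, hgq]
    have hp2 : p₂ = c • p₁ := by
      have := hmem2 1 one_pos
      rw [hq2, Matrix.mulVec_smul, (hmem 1 one_pos).2.2.2] at this
      exact this.symm
    have hsq : c * c = 1 := by
      rw [hp2, hq2] at h₂
      calc c * c = (c • p₁) ⬝ᵥ (c • q₁) := by
            simp [smul_dotProduct, dotProduct_smul, h₁]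
        _ = 1 := h₂
    rcases mul_self_eq_one_iff.mp hsq with h' | h'
    · left
      constructor
      · rw [hp2, h', one_smul]
      · rw [hq2, h', one_smul]
    · right
      constructor
      · rw [hp2, h', neg_one_smul, neg_neg]
      · rw [hq2, h', neg_one_smul, neg_neg]
  · rintro (⟨rfl, rfl⟩ | ⟨hp, hq⟩)
    · rfl
    · subst hp hq
      rw [hS, hS]
      ext M
      simp only [Set.mem_setOf_eq, and_congr_right_iff]
      intro _ _ _
      rw [Matrix.mulVec_neg, neg_eq_iff_eq_neg, eq_comm, neg_neg, eq_comm]
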